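/- The function z ↦ (z+1)(φ(z)+1) is a strictly increasing bijection from (-∞,-1) onto (-∞,0). Consequently, for every a > 0 there exists a unique z_a ∈ (-∞,-1) satisfying (z_a + 1)(φ(z_a) + 1) + a = 0. -/

import Mathlib

open Real Set

private lemma hasDeriv_f (x : ℝ) :
    HasDerivAt (fun x : ℝ => x * Real.exp x) ((1 + x) * Real.exp x) x := by
  have h := (hasDerivAt_id x).mul (Real.hasDerivAt_exp x)
  refine h.congr_deriv ?_
  simp [id]
  ring

private lemma cont_f : Continuous (fun x : ℝ => x * Real.exp x) :=
  continuous_id.mul Real.continuous_exp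

private lemma fmono : StrictMonoOn (fun x : ℝ => x * Real.exp x) (Set.Ici (-1 : ℝ)) := by
  apply strictMonoOn_of_deriv_pos (convex_Ici _) cont_f.continuousOn
  intro x hx
  rw [interior_Ici] at hx
  rw [(hasDeriv_f x).deriv]
  have := Real.exp_pos x
  have : (-1 : ℝ) < x := hx
  nlinarith [Real.exp_pos x]

private lemma fanti : StrictAntiOn (fun x : ℝ => x * Real.exp x) (Set.Iic (-1 : ℝ)) := by
  apply strictAntiOn_of_deriv_neg (convex_Iic _) cont_f.continuousOn
  intro x hx
  rw [interior_Iic] at hx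
  rw [(hasDeriv_f x).deriv]
  have : x < -1 := hx
  nlinarith [Real.exp_pos x]

section
variable (φ : ℝ → ℝ)
variable (hφ : ∀ z : ℝ, z < -1 → φ z ∈ Set.Ioo (-1 : ℝ) 0 ∧ φ z * Real.exp (φ z) = z * Real.exp z)

include hφ

private lemma phi_anti : ∀ z1 ∈ Set.Iio (-1:ℝ), ∀ z2 ∈ Set.Iio (-1:ℝ), z1 < z2 → φ z2 < φ z1 := by
  intro z1 hz1 z2 hz2 h12
  have hz1' : z1 < -1 := hz1
  have hz2' : z2 < -1 := hz2
  obtain ⟨m1, e1⟩ := hφ z1 hz1'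
  obtain ⟨m2, e2⟩ := hφ z2 hz2'
  have hf : z2 * Real.exp z2 < z1 * Real.exp z1 := fanti hz1'.le hz2'.le h12
  have hf2 : φ z2 * Real.exp (φ z2) < φ z1 * Real.exp (φ z1) := by rw [e1, e2]; exact hf
  exact (fmono.lt_iff_lt (Set.mem_Ici.mpr m2.1.le) (Set.mem_Ici.mpr m1.1.le)).mp hf2

end

private lemma exists_z (φ : ℝ → ℝ)
    (hφ : ∀ z : ℝ, z < -1 → φ z ∈ Set.Ioo (-1 : ℝ) 0 ∧ φ z * Real.exp (φ z) = z * Real.exp z)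
    (y : ℝ) (hy : y < 0) : ∃ z, z < -1 ∧ (z + 1) * (φ z + 1) = y := by
  set f : ℝ → ℝ := fun x => x * Real.exp x with hfdef
  -- choose a close to -1
  have heps : (0:ℝ) < Real.exp (-1) - 2 * Real.exp (-2) := by
    have h1 : Real.exp (-1) = Real.exp (-2) * Real.exp 1 := by rw [← Real.exp_add]; norm_num
    nlinarith [Real.exp_pos (-2), Real.exp_one_gt_d9]
  obtain ⟨δ, hδ, hδ'⟩ := Metric.continuousAt_iff.mp cont_f.continuousAt _ heps
  set m : ℝ := min δ (min (-y) 1) with hm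
  have hmpos : 0 < m := lt_min hδ (lt_min (by linarith) one_pos)
  set a : ℝ := -1 + m / 2 with ha
  have hm1 : m ≤ 1 := le_trans (min_le_right _ _) (min_le_right _ _)
  have hmy : m ≤ -y := le_trans (min_le_right _ _) (min_le_left _ _)
  have hmδ : m ≤ δ := min_le_left _ _
  have ha1 : -1 < a := by simp only [ha]; linarith
  have ha0 : a < 0 := by simp only [ha]; linarith
  have hfa : f a < -2 * Real.exp (-2) := by
    have hd : dist a (-1) < δ := by
      rw [Real.dist_eq]
      have : a - (-1) = m / 2 := by simp only [ha]; ring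
      rw [this, abs_of_pos (by linarith)]
      linarith
    have h2 := hδ' hd
    rw [Real.dist_eq] at h2
    have h3 := (abs_lt.mp h2).2
    show a * Real.exp a < -2 * Real.exp (-2)
    linarith
  have ha1' : 0 < a + 1 := by linarith
  -- the auxiliary function
  set h : ℝ → ℝ := fun w => f (y / (w + 1) - 1) - f w with hhdef
  -- h a > 0
  have hza : y / (a + 1) ≤ -2 := by
    rw [div_le_iff₀ ha1']
    simp only [ha]
    linarith
  have hha : 0 < h a := by
    have hz2 : y / (a + 1) - 1 ≤ -2 := by linarith
    have : f (-2) ≤ f (y / (a + 1) - 1) :=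
      fanti.antitoneOn (Set.mem_Iic.mpr (by linarith : y / (a+1) - 1 ≤ -1))
        (Set.mem_Iic.mpr (by norm_num : (-2:ℝ) ≤ -1)) hz2
    have hf2 : f (-2) = -2 * Real.exp (-2) := by simp [hfdef]
    simp only [hhdef]
    rw [hf2] at this
    linarith
  -- choose b close to 0
  have hcont0 : ContinuousAt h 0 := by
    apply ContinuousAt.sub
    · apply cont_f.continuousAt.comp
      exact ((continuousAt_const.div (by fun_prop) (by norm_num)).sub continuousAt_const)
    · exact cont_f.continuousAt
  have hh0 : h 0 = (y - 1) * Real.exp (y - 1) := by simp [hhdef, hfdef]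
  have hh0neg : h 0 < 0 := by
    rw [hh0]
    exact mul_neg_of_neg_of_pos (by linarith) (Real.exp_pos _)
  have hh0neg' : (y - 1) * Real.exp (y - 1) < 0 :=
    mul_neg_of_neg_of_pos (by linarith) (Real.exp_pos _)
  obtain ⟨δ2, hδ2, hδ2'⟩ := Metric.continuousAt_iff.mp hcont0
    (-((y - 1) * Real.exp (y - 1)) / 2) (by linarith)
  simp only [hh0] at hδ2' 
  set b : ℝ := max (a / 2) (-(min δ2 1) / 2) with hb
  have hmin2 : 0 < min δ2 1 := lt_min hδ2 one_pos
  have hb0 : b < 0 := max_lt (by linarith) (by linarith)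
  have hab : a < b := lt_of_lt_of_le (by linarith) (le_max_left _ _)
  have hhb : h b < 0 := by
    have hd : dist b 0 < δ2 := by
      rw [Real.dist_eq, sub_zero, abs_of_neg hb0]
      have : -(min δ2 1) / 2 ≤ b := le_max_right _ _
      have h3 : min δ2 1 ≤ δ2 := min_le_left _ _
      linarith
    have h4 := hδ2' hd
    rw [Real.dist_eq] at h4
    have h5 := (abs_lt.mp h4).2
    simp only [hhdef, hfdef] at h5 ⊢
    linarith
  -- IVT
  have hcontOn : ContinuousOn h (Set.Icc a b) := by
    apply ContinuousOn.sub
    · apply cont_f.comp_continuousOn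
      apply ContinuousOn.sub _ continuousOn_const
      apply continuousOn_const.div (by fun_prop)
      intro w hw
      have := hw.1
      have : -1 < w := lt_of_lt_of_le ha1 hw.1
      intro hc; linarith
    · exact cont_f.continuousOn
  have hmem : (0:ℝ) ∈ Set.Icc (h b) (h a) := ⟨hhb.le, hha.le⟩
  obtain ⟨w, hw, hw0⟩ := intermediate_value_Icc' hab.le hcontOn hmem
  have hwa : -1 < w := lt_of_lt_of_le ha1 hw.1
  have hwb : w < 0 := lt_of_le_of_lt hw.2 hb0
  have hw1 : 0 < w + 1 := by linarith
  set z : ℝ := y / (w + 1) - 1 with hz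
  have hzlt : z < -1 := by
    have : y / (w + 1) < 0 := div_neg_of_neg_of_pos hy hw1
    simp only [hz]; linarith
  obtain ⟨mz, ez⟩ := hφ z hzlt
  have hfeq : f (φ z) = f w := by
    have hzw : f z = f w := by
      have : h w = 0 := hw0
      simp only [hhdef] at this
      simp only [hz]
      linarith
    simp only [hfdef] at hzw ⊢
    rw [ez]; exact hzw
  have hφw : φ z = w :=
    fmono.injOn (Set.mem_Ici.mpr mz.1.le) (Set.mem_Ici.mpr hwa.le) hfeq
  refine ⟨z, hzlt, ?_⟩
  rw [hφw]
  have : z + 1 = y / (w + 1) := by simp only [hz]; ring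
  rw [this, div_mul_cancel₀]
  linarith

theorem stmt_8 (φ : ℝ → ℝ)
    (hφ : ∀ z : ℝ, z < -1 → φ z ∈ Set.Ioo (-1 : ℝ) 0 ∧ φ z * Real.exp (φ z) = z * Real.exp z) :
    StrictMonoOn (fun z => (z + 1) * (φ z + 1)) (Set.Iio (-1 : ℝ)) ∧
    Set.BijOn (fun z => (z + 1) * (φ z + 1)) (Set.Iio (-1 : ℝ)) (Set.Iio (0 : ℝ)) ∧
    (∀ a : ℝ, 0 < a → ∃! z : ℝ, z < -1 ∧ (z + 1) * (φ z + 1) + a = 0) := by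
  have mono : StrictMonoOn (fun z => (z + 1) * (φ z + 1)) (Set.Iio (-1 : ℝ)) := by
    intro z1 hz1 z2 hz2 h12
    have hp := phi_anti φ hφ z1 hz1 z2 hz2 h12
    have h1 := (hφ z1 hz1).1
    have h2 := (hφ z2 hz2).1
    simp only
    have hz1' : z1 < -1 := hz1
    have hz2' : z2 < -1 := hz2
    nlinarith [h1.1, h2.1, h1.2, h2.2]
  refine ⟨mono, ⟨?_, mono.injOn, ?_⟩, ?_⟩
  · intro z hz
    have h := (hφ z hz).1
    have hz' : z < -1 := hz
    simp only [Set.mem_Iio]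
    nlinarith [h.1, h.2]
  · intro y hy
    obtain ⟨z, hz, hzy⟩ := exists_z φ hφ y hy
    exact ⟨z, hz, hzy⟩
  · intro a ha
    obtain ⟨z, hz, hzy⟩ := exists_z φ hφ (-a) (by linarith)
    refine ⟨z, ⟨hz, by linarith⟩, ?_⟩
    intro z' ⟨hz', hz'y⟩
    refine mono.injOn hz' hz ?_
    show (z' + 1) * (φ z' + 1) = (z + 1) * (φ z + 1)
    linarith
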